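/- If a directed graph G on N nodes with L edges is quasi-strongly connected (has a directed spanning tree), then the edge Laplacian L_e = E^T E_⊙^w has exactly N−1 nonzero eigenvalues, all of which lie in the open right-half complex plane, and L−N+1 zero eigenvalues. -/

import Mathlib

open Matrix Polynomial

lemma aux_smul_one_eq_scalar {R : Type*} [CommRing R] {m : Type*} [Fintype m] [DecidableEq m]
    (r : R) : r • (1 : Matrix m m R) = Matrix.scalar m r := by
  ext i j
  simp [Matrix.scalar_apply, Matrix.one_apply, Matrix.diagonal_apply]

lemma aux_charpoly_mul_comm_rect {R : Type*} [CommRing R] {m n : Type*}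
    [Fintype m] [Fintype n] [DecidableEq m] [DecidableEq n]
    (P : Matrix m n R) (Q : Matrix n m R) :
    (P * Q).charpoly * X ^ (Fintype.card n) = (Q * P).charpoly * X ^ (Fintype.card m) := by
  classical
  set P' : Matrix m n R[X] := P.map C with hP'
  set Q' : Matrix n m R[X] := Q.map C with hQ'
  have hPQ : P' * Q' = (P * Q).map C := by
    ext i j; simp [hP', hQ', Matrix.mul_apply, map_sum]
  have hQP : Q' * P' = (Q * P).map C := by
    ext i j; simp [hP', hQ', Matrix.mul_apply, map_sum]
  have h1 : (fromBlocks ((X : R[X]) • 1) P' Q' 1).det = (P * Q).charpoly := by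
    rw [Matrix.det_fromBlocks_one₂₂, Matrix.charpoly, Matrix.charmatrix, hPQ,
      aux_smul_one_eq_scalar, RingHom.mapMatrix_apply]
  have h2 : (fromBlocks (1 : Matrix m m R[X]) P' Q' ((X : R[X]) • 1)).det = (Q * P).charpoly := by
    rw [Matrix.det_fromBlocks_one₁₁, Matrix.charpoly, Matrix.charmatrix, hQP,
      aux_smul_one_eq_scalar, RingHom.mapMatrix_apply]
  have key : fromBlocks ((X : R[X]) • 1) P' Q' 1 * fromBlocks 1 0 0 ((X : R[X]) • 1)
      = fromBlocks ((X : R[X]) • 1) 0 0 1 * fromBlocks 1 P' Q' ((X : R[X]) • 1) := by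
    simp [Matrix.fromBlocks_multiply, Matrix.mul_smul, Matrix.smul_mul]
  have hdet := congrArg Matrix.det key
  rw [Matrix.det_mul, Matrix.det_mul, Matrix.det_fromBlocks_zero₂₁,
    Matrix.det_fromBlocks_zero₂₁, h1, h2] at hdet
  simp only [Matrix.det_one, one_mul, mul_one] at hdet
  rw [Matrix.det_smul, Matrix.det_smul] at hdet
  simp only [Matrix.det_one, mul_one] at hdet
  rw [hdet]; ring

section Graph
variable {N L : ℕ} {src tgt : Fin L → Fin N} {w : Fin L → ℝ}
  {E Eow : Matrix (Fin N) (Fin L) ℝ}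

/-- mulVec formula for the in-Laplacian `Eow * Eᵀ`. -/
lemma aux_mulVec_formula (hst : ∀ k, src k ≠ tgt k)
    (hE : ∀ i k, E i k = if i = src k then 1 else if i = tgt k then -1 else 0)
    (hEow : ∀ i k, Eow i k = if i = tgt k then -(w k) else 0)
    (u : Fin N → ℝ) (i : Fin N) :
    ((Eow * Eᵀ).mulVec u) i
      = ∑ k, if tgt k = i then w k * (u i - u (src k)) else 0 := by
  rw [← Matrix.mulVec_mulVec]
  have hET : ∀ k, (Eᵀ.mulVec u) k = u (src k) - u (tgt k) := by
    intro k
    have hterm : ∀ j, Eᵀ k j * u j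
        = (if j = src k then u j else 0) - (if j = tgt k then u j else 0) := by
      intro j
      rw [Matrix.transpose_apply, hE]
      rcases eq_or_ne j (src k) with h1 | h1
      · subst h1
        rw [if_pos rfl, if_pos rfl, if_neg (hst k)]
        ring
      · rw [if_neg h1, if_neg h1]
        rcases eq_or_ne j (tgt k) with h2 | h2
        · subst h2
          rw [if_pos rfl, if_pos rfl]
          ring
        · rw [if_neg h2, if_neg h2]
          ring
    show (∑ j, Eᵀ k j * u j) = _
    simp only [hterm, Finset.sum_sub_distrib, Finset.sum_ite_eq', Finset.mem_univ, if_true]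
  show (∑ k, Eow i k * (Eᵀ.mulVec u) k) = _
  refine Finset.sum_congr rfl fun k _ => ?_
  rw [hET k, hEow]
  rcases eq_or_ne (tgt k) i with h | h
  · subst h
    rw [if_pos rfl, if_pos rfl]
    ring
  · rw [if_neg (fun h' => h h'.symm), if_neg h, zero_mul]

/-- If the in-Laplacian maps `u` to a constant vector, the constant is zero. -/
lemma aux_const_eq_zero (hN : 0 < N) (hw : ∀ k, 0 < w k) {u : Fin N → ℝ} {t : ℝ}
    (h : ∀ i, (∑ k, if tgt k = i then w k * (u i - u (src k)) else 0) = t) :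
    t = 0 := by
  have : Nonempty (Fin N) := ⟨⟨0, hN⟩⟩
  obtain ⟨i₀, -, hmax⟩ := Finset.exists_max_image Finset.univ u Finset.univ_nonempty
  obtain ⟨i₁, -, hmin⟩ := Finset.exists_min_image Finset.univ u Finset.univ_nonempty
  have h1 : 0 ≤ t := by
    rw [← h i₀]
    refine Finset.sum_nonneg fun k _ => ?_
    split
    · have := hmax (src k) (Finset.mem_univ _)
      have := (hw k).le
      nlinarith
    · exact le_refl 0
  have h2 : t ≤ 0 := by
    rw [← h i₁]
    refine Finset.sum_nonpos fun k _ => ?_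
    split
    · have := hmin (src k) (Finset.mem_univ _)
      have := (hw k).le
      nlinarith
    · exact le_refl 0
  linarith

/-- Max propagation: if `u` is in the kernel, the value at the root equals the max. -/
lemma aux_root_eq_max (hw : ∀ k, 0 < w k) {u : Fin N → ℝ}
    (h : ∀ i, (∑ k, if tgt k = i then w k * (u i - u (src k)) else 0) = 0)
    {i₀ r : Fin N} (hmax : ∀ j, u j ≤ u i₀)
    (hreach : Relation.ReflTransGen (fun a b => ∃ k : Fin L, src k = a ∧ tgt k = b) r i₀) :
    u r = u i₀ := by
  have key : ∀ i, Relation.ReflTransGen (fun a b => ∃ k : Fin L, src k = a ∧ tgt k = b) r i →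
      u i = u i₀ → u r = u i₀ := by
    intro i hi
    induction hi with
    | refl => exact id
    | tail hab hedge ih =>
      rename_i b c
      intro hc
      obtain ⟨k, hks, hkt⟩ := hedge
      have hterm := (Finset.sum_eq_zero_iff_of_nonneg (fun k' _ => by
          split
          · rename_i hk'
            nlinarith [hc, hmax (src k'), (hw k').le]
          · exact le_refl 0)).mp (h c) k (Finset.mem_univ k)
      rw [if_pos hkt] at hterm
      have hb : u (src k) = u c := by
        rcases mul_eq_zero.mp hterm with h' | h'
        · exact absurd h' (hw k).ne'
        · linarith
      exact ih (by rw [hks] at hb; rw [hb, hc])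
  exact key i₀ hreach rfl

/-- Real kernel of the in-Laplacian is constant vectors, given a spanning tree. -/
lemma aux_kernel_const (hw : ∀ k, 0 < w k) {u : Fin N → ℝ}
    (h : ∀ i, (∑ k, if tgt k = i then w k * (u i - u (src k)) else 0) = 0)
    {r : Fin N}
    (hqsc : ∀ i : Fin N, Relation.ReflTransGen
      (fun a b => ∃ k : Fin L, src k = a ∧ tgt k = b) r i) (i : Fin N) :
    u i = u r := by
  have : Nonempty (Fin N) := ⟨r⟩
  obtain ⟨i₀, -, hmax⟩ := Finset.exists_max_image Finset.univ u Finset.univ_nonempty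
  obtain ⟨i₁, -, hmin⟩ := Finset.exists_min_image Finset.univ u Finset.univ_nonempty
  have hmax' : ∀ j, u j ≤ u i₀ := fun j => hmax j (Finset.mem_univ j)
  have hmin' : ∀ j, u i₁ ≤ u j := fun j => hmin j (Finset.mem_univ j)
  have h0 := aux_root_eq_max hw h hmax' (hqsc i₀)
  have hneg : ∀ i', (∑ k, if tgt k = i' then w k * ((-u) i' - (-u) (src k)) else 0) = 0 := by
    intro i'
    have heq : (∑ k, if tgt k = i' then w k * ((-u) i' - (-u) (src k)) else 0)
        = -(∑ k, if tgt k = i' then w k * (u i' - u (src k)) else 0) := by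
      rw [← Finset.sum_neg_distrib]
      refine Finset.sum_congr rfl fun k _ => ?_
      by_cases hk : tgt k = i'
      · rw [if_pos hk, if_pos hk]; simp only [Pi.neg_apply]; ring
      · rw [if_neg hk, if_neg hk, neg_zero]
    rw [heq, h i', neg_zero]
  have h1 := aux_root_eq_max hw hneg (i₀ := i₁) (fun j => by simp [hmin' j]) (hqsc i₁)
  simp only [Pi.neg_apply, neg_eq_iff_eq_neg, neg_neg] at h1
  have := hmax' i
  have := hmin' i
  linarith [hmax' r, hmin' r]

end Graph

/-- The trailing degree of the charpoly of the complexified in-Laplacian is 1. -/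
lemma aux_trailing_degree {N L : ℕ} {src tgt : Fin L → Fin N} {w : Fin L → ℝ}
    {E Eow : Matrix (Fin N) (Fin L) ℝ}
    (hN : 0 < N) (hst : ∀ k, src k ≠ tgt k) (hw : ∀ k, 0 < w k)
    (hqsc : ∃ r : Fin N, ∀ i : Fin N,
      Relation.ReflTransGen (fun a b => ∃ k : Fin L, src k = a ∧ tgt k = b) r i)
    (hE : ∀ i k, E i k = if i = src k then 1 else if i = tgt k then -1 else 0)
    (hEow : ∀ i k, Eow i k = if i = tgt k then -(w k) else 0) :
    ((Eow * Eᵀ).map Complex.ofReal).charpoly.natTrailingDegree = 1 := by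
  obtain ⟨r, hr⟩ := hqsc
  set LG := Eow * Eᵀ with hLG
  set Lc := LG.map Complex.ofReal with hLc
  have expand : ∀ (x : Fin N → ℂ) i, Lc.mulVec x i = ∑ j, (LG i j : ℂ) * x j := by
    intro x i
    simp [hLc, Matrix.mulVec, dotProduct, Matrix.map_apply]
  have hre : ∀ (x : Fin N → ℂ) i,
      (Lc.mulVec x i).re = LG.mulVec (fun j => (x j).re) i := by
    intro x i
    rw [expand, Complex.re_sum]
    refine Finset.sum_congr rfl fun j _ => ?_
    simp [Complex.mul_re]
  have him : ∀ (x : Fin N → ℂ) i,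
      (Lc.mulVec x i).im = LG.mulVec (fun j => (x j).im) i := by
    intro x i
    rw [expand, Complex.im_sum]
    refine Finset.sum_congr rfl fun j _ => ?_
    simp [Complex.mul_im]
  have hker0 : ∀ x : Fin N → ℂ, Lc.mulVec x = 0 → ∀ i, x i = x r := by
    intro x hx i
    have hu : ∀ i', (∑ k, if tgt k = i' then
        w k * ((x i').re - (x (src k)).re) else 0) = 0 := by
      intro i'
      rw [← aux_mulVec_formula hst hE hEow (fun j => (x j).re) i', ← hre x i', hx]
      simp
    have hv : ∀ i', (∑ k, if tgt k = i' then
        w k * ((x i').im - (x (src k)).im) else 0) = 0 := by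
      intro i'
      rw [← aux_mulVec_formula hst hE hEow (fun j => (x j).im) i', ← him x i', hx]
      simp
    have h1 := aux_kernel_const hw hu hr i
    have h2 := aux_kernel_const hw hv hr i
    exact Complex.ext h1 h2
  have hKmat : ∀ x : Fin N → ℂ, Lc.mulVec (Lc.mulVec x) = 0 → Lc.mulVec x = 0 := by
    intro x hx
    have hyc := hker0 _ hx
    have hre' : ∀ i, (∑ k, if tgt k = i then
        w k * ((x i).re - (x (src k)).re) else 0) = (Lc.mulVec x r).re := by
      intro i
      rw [← aux_mulVec_formula hst hE hEow (fun j => (x j).re) i, ← hre x i, hyc i]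
    have him' : ∀ i, (∑ k, if tgt k = i then
        w k * ((x i).im - (x (src k)).im) else 0) = (Lc.mulVec x r).im := by
      intro i
      rw [← aux_mulVec_formula hst hE hEow (fun j => (x j).im) i, ← him x i, hyc i]
    have hre0 := aux_const_eq_zero hN hw hre'
    have him0 := aux_const_eq_zero hN hw him'
    funext i
    rw [hyc i, Pi.zero_apply]
    exact Complex.ext (by rw [hre0]; rfl) (by rw [him0]; rfl)
  have hrow : ∀ i, LG.mulVec (fun _ => (1:ℝ)) i = 0 := by
    intro i
    rw [aux_mulVec_formula hst hE hEow]
    refine Finset.sum_eq_zero fun k _ => ?_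
    split <;> simp
  have hone : Lc.mulVec (fun _ => (1:ℂ)) = 0 := by
    funext i
    rw [expand]
    have : ((LG.mulVec (fun _ => (1:ℝ)) i : ℝ) : ℂ) = ∑ j, (LG i j : ℂ) * 1 := by
      rw [show LG.mulVec (fun _ => (1:ℝ)) i = ∑ j, LG i j * 1 from rfl]
      push_cast
      rfl
    rw [← this, hrow, Complex.ofReal_zero, Pi.zero_apply]
  set φ : Module.End ℂ (Fin N → ℂ) := Matrix.toLin' Lc with hφ
  have hφap : ∀ x, φ x = Lc.mulVec x := fun x => Matrix.toLin'_apply Lc x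
  have hK : ∀ x : Fin N → ℂ, φ (φ x) = 0 → φ x = 0 := by
    intro x hx
    rw [hφap] at hx ⊢
    rw [hφap] at hx
    exact hKmat x hx
  have hsub : ∀ k : ℕ, LinearMap.ker (φ ^ k) ≤ LinearMap.ker φ := by
    intro k
    induction k with
    | zero =>
      intro x hx
      rw [LinearMap.mem_ker, pow_zero, Module.End.one_apply] at hx
      rw [LinearMap.mem_ker, hx, map_zero]
    | succ k ih =>
      intro x hx
      rw [LinearMap.mem_ker, pow_succ, Module.End.mul_apply] at hx
      have h1 : φ x ∈ LinearMap.ker (φ ^ k) := hx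
      have h2 : φ (φ x) = 0 := ih h1
      exact hK x h2
  have hmax : φ.maxGenEigenspace 0 = LinearMap.ker φ := by
    apply le_antisymm
    · intro x hx
      rw [Module.End.mem_maxGenEigenspace] at hx
      obtain ⟨k, hk⟩ := hx
      simp only [zero_smul, sub_zero] at hk
      exact hsub k hk
    · intro x hx
      rw [Module.End.mem_maxGenEigenspace]
      exact ⟨1, by simpa using hx⟩
  have honev : (fun _ => (1:ℂ) : Fin N → ℂ) ≠ 0 := by
    intro h
    have := congrFun h ⟨0, hN⟩
    simp at this
  have hspan : LinearMap.ker φ = Submodule.span ℂ {(fun _ => (1:ℂ) : Fin N → ℂ)} := by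
    apply le_antisymm
    · intro x hx
      rw [LinearMap.mem_ker, hφap] at hx
      have hc := hker0 x hx
      rw [Submodule.mem_span_singleton]
      exact ⟨x r, by funext i; simp [(hc i).symm]⟩
    · intro x hx
      rw [Submodule.mem_span_singleton] at hx
      obtain ⟨a, rfl⟩ := hx
      rw [LinearMap.mem_ker, _root_.map_smul, hφap, hone, smul_zero]
  have hchar := LinearMap.charpoly_toMatrix φ (Pi.basisFun ℂ (Fin N))
  rw [LinearMap.toMatrix_eq_toMatrix', hφ, LinearMap.toMatrix'_toLin'] at hchar
  rw [hchar, ← hφ, ← LinearMap.finrank_maxGenEigenspace_zero_eq φ, hmax, hspan]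
  exact finrank_span_singleton honev

/-- Nonzero roots of the charpoly of the complexified in-Laplacian have positive real part. -/
lemma aux_rhp {N L : ℕ} {src tgt : Fin L → Fin N} {w : Fin L → ℝ}
    {E Eow : Matrix (Fin N) (Fin L) ℝ}
    (hst : ∀ k, src k ≠ tgt k) (hw : ∀ k, 0 < w k)
    (hE : ∀ i k, E i k = if i = src k then 1 else if i = tgt k then -1 else 0)
    (hEow : ∀ i k, Eow i k = if i = tgt k then -(w k) else 0)
    {lam : ℂ} (hmem : lam ∈ ((Eow * Eᵀ).map Complex.ofReal).charpoly.roots)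
    (hlam : lam ≠ 0) : 0 < lam.re := by
  set LG := Eow * Eᵀ with hLG
  set Lc := LG.map Complex.ofReal with hLc
  have hdiag : ∀ i, LG i i = ∑ k, (if tgt k = i then w k else 0) := by
    intro i
    rw [hLG, Matrix.mul_apply]
    refine Finset.sum_congr rfl fun k _ => ?_
    rw [Matrix.transpose_apply, hEow, hE]
    rcases eq_or_ne (tgt k) i with h | h
    · rw [if_pos h.symm, if_pos h, if_neg (fun h' : i = src k => (hst k) (h' ▸ h.symm ▸ rfl)),
        if_pos h.symm]
      ring
    · rw [if_neg (fun h' => h h'.symm), if_neg h, zero_mul]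
  have hoff : ∀ i j, j ≠ i → LG i j ≤ 0 := by
    intro i j hj
    rw [hLG, Matrix.mul_apply]
    refine Finset.sum_nonpos fun k _ => ?_
    rw [Matrix.transpose_apply, hEow, hE]
    rcases eq_or_ne i (tgt k) with h | h
    · rw [if_pos h]
      rcases eq_or_ne j (src k) with h2 | h2
      · rw [if_pos h2]
        nlinarith [hw k]
      · rw [if_neg h2, if_neg (fun h' : j = tgt k => hj (h' ▸ h ▸ rfl)), mul_zero]
    · rw [if_neg h, zero_mul]
  have hrowsum : ∀ i, ∑ j, LG i j = 0 := by
    intro i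
    have h0 : LG.mulVec (fun _ => (1:ℝ)) i = 0 := by
      rw [aux_mulVec_formula hst hE hEow]
      refine Finset.sum_eq_zero fun k _ => ?_
      split <;> simp
    rw [show LG.mulVec (fun _ => (1:ℝ)) i = ∑ j, LG i j * 1 from rfl] at h0
    simpa using h0
  have hradius : ∀ i, (∑ j ∈ Finset.univ.erase i, ‖Lc i j‖) = LG i i := by
    intro i
    have hn : ∀ j ∈ Finset.univ.erase i, ‖Lc i j‖ = -(LG i j) := by
      intro j hj
      have hj' : j ≠ i := Finset.ne_of_mem_erase hj
      rw [show Lc i j = ((LG i j : ℝ) : ℂ) from rfl, Complex.norm_real, Real.norm_eq_abs,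
        abs_of_nonpos (hoff i j hj')]
    rw [Finset.sum_congr rfl hn, Finset.sum_neg_distrib]
    have := Finset.sum_erase_add Finset.univ (fun j => LG i j) (Finset.mem_univ i)
    rw [hrowsum i] at this
    linarith [this]
  -- lam is an eigenvalue of Lc
  have hch : Lc.charpoly.IsRoot lam :=
    (Polynomial.mem_roots (Matrix.charpoly_monic Lc).ne_zero).mp hmem
  have hdet : ((lam • (1 : Matrix (Fin N) (Fin N) ℂ)) - Lc).det = 0 := by
    have hmd := RingHom.map_det (Polynomial.evalRingHom lam) (Matrix.charmatrix Lc)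
    rw [RingHom.mapMatrix_apply] at hmd
    have hmap : (Matrix.charmatrix Lc).map (Polynomial.evalRingHom lam)
        = lam • (1 : Matrix (Fin N) (Fin N) ℂ) - Lc := by
      ext i j
      rcases eq_or_ne i j with h | h
      · subst h
        simp [Matrix.map_apply, Matrix.charmatrix_apply_eq, Matrix.smul_apply, Matrix.one_apply]
      · simp [Matrix.map_apply, Matrix.charmatrix_apply_ne _ _ _ h, Matrix.smul_apply,
          Matrix.one_apply, h]
    rw [hmap] at hmd
    rw [← hmd]
    exact hch
  obtain ⟨v, hv0, hv⟩ := (Matrix.exists_mulVec_eq_zero_iff).mpr hdet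
  have hvv : Lc.mulVec v = lam • v := by
    rw [Matrix.sub_mulVec, sub_eq_zero] at hv
    rw [← hv, Matrix.smul_mulVec, Matrix.one_mulVec]
  have heig : Module.End.HasEigenvalue (Matrix.toLin' Lc) lam :=
    Module.End.hasEigenvalue_of_hasEigenvector
      ⟨Module.End.mem_eigenspace_iff.mpr (by rw [Matrix.toLin'_apply, hvv]), hv0⟩
  obtain ⟨i, hball⟩ := eigenvalue_mem_ball heig
  rw [Metric.mem_closedBall, hradius i] at hball
  set d := LG i i with hd
  have hd0 : 0 ≤ d := by
    rw [hd, hdiag]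
    refine Finset.sum_nonneg fun k _ => ?_
    split
    · exact (hw k).le
    · exact le_refl 0
  have hcii : Lc i i = ((d : ℝ) : ℂ) := rfl
  rw [hcii] at hball
  have habs : ‖lam - (d:ℂ)‖ ≤ d := by
    rwa [Complex.dist_eq] at hball
  have hsq : (lam.re - d)^2 + lam.im^2 ≤ d^2 := by
    have h1 := Complex.sq_norm (lam - (d:ℂ))
    have h2 : Complex.normSq (lam - (d:ℂ)) = (lam.re - d)^2 + lam.im^2 := by
      simp [Complex.normSq_apply, Complex.sub_re, Complex.sub_im]
      ring
    nlinarith [norm_nonneg (lam - (d:ℂ))]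
  by_contra hle
  push_neg at hle
  apply hlam
  have hre0 : lam.re = 0 := by nlinarith
  have him0 : lam.im = 0 := by nlinarith
  exact Complex.ext hre0 him0

/-- If a directed graph `G` on `N` nodes with `L` edges is quasi-strongly
connected (there is a root from which every node is reachable along directed edges, i.e.
`G` has a directed spanning tree), then the edge Laplacian `L_e = Eᵀ * E_⊙^w` has exactly
`N − 1` nonzero eigenvalues (with multiplicity), all in the open right-half complex plane,
and `L − N + 1` zero eigenvalues. -/
theorem edge_laplacian_spectrum_of_quasi_strongly_connected
    (N L : ℕ) (hN : 0 < N) (src tgt : Fin L → Fin N) (hst : ∀ k, src k ≠ tgt k)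
    (w : Fin L → ℝ) (hw : ∀ k, 0 < w k)
    (hqsc : ∃ r : Fin N, ∀ i : Fin N,
      Relation.ReflTransGen (fun a b => ∃ k : Fin L, src k = a ∧ tgt k = b) r i)
    (E Eow : Matrix (Fin N) (Fin L) ℝ)
    (hE : ∀ i k, E i k = if i = src k then 1 else if i = tgt k then -1 else 0)
    (hEow : ∀ i k, Eow i k = if i = tgt k then -(w k) else 0) :
    ((Eᵀ * Eow).map Complex.ofReal).charpoly.roots.count 0 = L - (N - 1) ∧
    Multiset.card (((Eᵀ * Eow).map Complex.ofReal).charpoly.roots.filter (· ≠ 0)) = N - 1 ∧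
    ∀ lam ∈ ((Eᵀ * Eow).map Complex.ofReal).charpoly.roots, lam ≠ 0 → 0 < lam.re := by
  classical
  set P : Matrix (Fin L) (Fin N) ℂ := Eᵀ.map Complex.ofReal with hP
  set Q : Matrix (Fin N) (Fin L) ℂ := Eow.map Complex.ofReal with hQ
  have hA : (Eᵀ * Eow).map Complex.ofReal = P * Q := by
    ext i j
    simp [hP, hQ, Matrix.mul_apply, Matrix.map_apply]
  have hB : (Eow * Eᵀ).map Complex.ofReal = Q * P := by
    ext i j
    simp [hP, hQ, Matrix.mul_apply, Matrix.map_apply]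
  set p := ((Eᵀ * Eow).map Complex.ofReal).charpoly with hp
  set q := ((Eow * Eᵀ).map Complex.ofReal).charpoly with hq
  have key : p * X ^ N = q * X ^ L := by
    have := aux_charpoly_mul_comm_rect P Q
    simpa [← hA, ← hB, ← hp, ← hq] using this
  have hpne : p ≠ 0 := (Matrix.charpoly_monic _).ne_zero
  have hqne : q ≠ 0 := (Matrix.charpoly_monic _).ne_zero
  have hXN : (X ^ N : ℂ[X]) ≠ 0 := pow_ne_zero _ Polynomial.X_ne_zero
  have hXL : (X ^ L : ℂ[X]) ≠ 0 := pow_ne_zero _ Polynomial.X_ne_zero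
  have hroots : p.roots + Multiset.replicate N 0 = q.roots + Multiset.replicate L 0 := by
    have h1 : (p * X ^ N).roots = p.roots + Multiset.replicate N 0 := by
      rw [Polynomial.roots_mul (mul_ne_zero hpne hXN), Polynomial.roots_pow,
        Polynomial.roots_X, Multiset.nsmul_singleton]
    have h2 : (q * X ^ L).roots = q.roots + Multiset.replicate L 0 := by
      rw [Polynomial.roots_mul (mul_ne_zero hqne hXL), Polynomial.roots_pow,
        Polynomial.roots_X, Multiset.nsmul_singleton]
    rw [← h1, ← h2, key]
  have hq1 : q.roots.count 0 = 1 := by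
    rw [Polynomial.count_roots, Polynomial.rootMultiplicity_eq_natTrailingDegree', hq]
    exact aux_trailing_degree hN hst hw hqsc hE hEow
  have hqcard : Multiset.card q.roots = N := by
    rw [Polynomial.splits_iff_card_roots.mp (IsAlgClosed.splits q), hq,
      Matrix.charpoly_natDegree_eq_dim, Fintype.card_fin]
  have hcount : p.roots.count 0 + N = q.roots.count 0 + L := by
    have := congrArg (Multiset.count 0) hroots
    simpa [Multiset.count_add, Multiset.count_replicate] using this
  have hfilter : p.roots.filter (· ≠ 0) = q.roots.filter (· ≠ 0) := by
    have hrep : ∀ (n : ℕ), (Multiset.replicate n (0:ℂ)).filter (fun x => ¬ x = 0) = 0 := by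
      intro n
      apply Multiset.eq_zero_of_forall_notMem
      intro x hx
      obtain ⟨hx1, hx2⟩ := Multiset.mem_filter.mp hx
      exact hx2 (Multiset.eq_of_mem_replicate hx1)
    have := congrArg (Multiset.filter (· ≠ 0)) hroots
    simpa [Multiset.filter_add, hrep] using this
  have hqfiltercard : Multiset.card (q.roots.filter (· ≠ 0)) = N - 1 := by
    have hsplit := Multiset.filter_add_not (· ≠ 0) q.roots
    have hcards := congrArg Multiset.card hsplit
    rw [Multiset.card_add] at hcards
    have heq0 : (q.roots.filter (fun a => ¬ a ≠ 0)) = q.roots.filter (0 = ·) := by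
      apply Multiset.filter_congr
      intro x _
      constructor
      · intro h; rw [not_not] at h; exact h.symm
      · intro h; rw [not_not]; exact h.symm
    rw [heq0, ← Multiset.count_eq_card_filter_eq, hq1, hqcard] at hcards
    omega
  rw [hq1] at hcount
  refine ⟨?_, ?_, ?_⟩
  · omega
  · rw [hfilter, hqfiltercard]
  · intro lam hmem hlam
    have h1 : lam ∈ p.roots.filter (· ≠ 0) := Multiset.mem_filter.mpr ⟨hmem, hlam⟩
    rw [hfilter] at h1
    have h2 : lam ∈ q.roots := (Multiset.mem_filter.mp h1).1
    exact aux_rhp hst hw hE hEow (hq ▸ h2) hlam
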